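/- (Intermediate bound in the proof of Theorem 3.2(i).) Under the Dantzig-selector hypotheses, with h := θ₀ − θ̂, S := |T₀| and K₄ := 4/ν, one has κ(T₀; J)² · ‖h_{T₀}‖₁² ≤ S ε ‖h‖₁² + K₄ S γ ‖h‖₁, where ε := max_{i,j} |(V(θ₀) − J)_{ij}|. -/

import Mathlib

open Finset

/-- ℓ₁ norm on `Fin p → ℝ`. -/
noncomputable def l1 {p : ℕ} (v : Fin p → ℝ) : ℝ := ∑ i, |v i|

/-- ℓ₁ norm of the subvector indexed by `T`. -/
noncomputable def l1on {p : ℕ} (T : Finset (Fin p)) (v : Fin p → ℝ) : ℝ := ∑ i ∈ T, |v i|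

/-- ℓ₂ norm on `Fin p → ℝ`. -/
noncomputable def l2 {p : ℕ} (v : Fin p → ℝ) : ℝ := Real.sqrt (∑ i, (v i) ^ 2)

/-- ℓ_∞ norm on `Fin p → ℝ`. -/
noncomputable def linf {p : ℕ} (v : Fin p → ℝ) : ℝ := ⨆ i, |v i|

/-- ℓ_q norm on `Fin p → ℝ` for real `q ≥ 1`. -/
noncomputable def lqnorm {p : ℕ} (q : ℝ) (v : Fin p → ℝ) : ℝ := (∑ i, |v i| ^ q) ^ (1 / q)

/-- Quadratic form `hᵀ J h`. -/
noncomputable def quadForm {p : ℕ} (J : Matrix (Fin p) (Fin p) ℝ) (h : Fin p → ℝ) : ℝ :=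
  ∑ i, ∑ j, h i * J i j * h j

/-- The cone `C_T = {h : ‖h_{Tᶜ}‖₁ ≤ ‖h_T‖₁}`. -/
def cone {p : ℕ} (T : Finset (Fin p)) : Set (Fin p → ℝ) := {h | l1on Tᶜ h ≤ l1on T h}

/-- Compatibility factor `κ(T; J)`. -/
noncomputable def kappa {p : ℕ} (T : Finset (Fin p)) (J : Matrix (Fin p) (Fin p) ℝ) : ℝ :=
  sInf {r | ∃ h : Fin p → ℝ, h ≠ 0 ∧ h ∈ cone T ∧
    r = Real.sqrt T.card * Real.sqrt (quadForm J h) / l1on T h}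

/-- Restricted eigenvalue `RE(T; J)`. -/
noncomputable def RE {p : ℕ} (T : Finset (Fin p)) (J : Matrix (Fin p) (Fin p) ℝ) : ℝ :=
  sInf {r | ∃ h : Fin p → ℝ, h ≠ 0 ∧ h ∈ cone T ∧
    r = Real.sqrt (quadForm J h) / l2 h}

/-- Weak cone invertibility factor at `q = ∞`, `F_∞(T; J)`. -/
noncomputable def Finf {p : ℕ} (T : Finset (Fin p)) (J : Matrix (Fin p) (Fin p) ℝ) : ℝ :=
  sInf {r | ∃ h : Fin p → ℝ, h ≠ 0 ∧ h ∈ cone T ∧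
    r = Real.sqrt (quadForm J h) / linf h}

/-- Weak cone invertibility factor `F_q(T; J)` for `q ∈ [1,∞)`
(with the quadratic form without square root, as in the paper's proofs). -/
noncomputable def Fq {p : ℕ} (q : ℝ) (T : Finset (Fin p)) (J : Matrix (Fin p) (Fin p) ℝ) : ℝ :=
  sInf {r | ∃ h : Fin p → ℝ, h ≠ 0 ∧ h ∈ cone T ∧
    r = (T.card : ℝ) ^ (1 / q) * quadForm J h / (l1on T h * lqnorm q h)}

/-- `g(x) = (e^{2x} - 1)/x` for `x ≠ 0`, `g(0) = 2`. -/
noncomputable def g (x : ℝ) : ℝ := if x = 0 then 2 else (Real.exp (2 * x) - 1) / x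

/-- Gradient of the log-quasi-likelihood (divided by `n`), with `b = 0`, `Δ = 1/n`:
`ψ(θ)_i = (1/(nΔ)) Σ_k z_{k,i}(e^{-2⟨θ,z_k⟩}(x_k - x_{k-1})² - Δ)`. -/
noncomputable def psiD {n p : ℕ} (x : Fin (n + 1) → ℝ) (z : Fin n → Fin p → ℝ)
    (θ : Fin p → ℝ) (i : Fin p) : ℝ :=
  (1 / ((n : ℝ) * (1 / n))) * ∑ k, z k i *
    (Real.exp (-2 * ∑ j, θ j * z k j) * (x k.succ - x k.castSucc) ^ 2 - 1 / n)

/-- Negative Hessian (divided by `n`):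
`V(θ) = (2/(nΔ)) Σ_k e^{-2⟨θ,z_k⟩}(x_k - x_{k-1})² z_k z_kᵀ`. -/
noncomputable def VD {n p : ℕ} (x : Fin (n + 1) → ℝ) (z : Fin n → Fin p → ℝ)
    (θ : Fin p → ℝ) : Matrix (Fin p) (Fin p) ℝ := fun i j =>
  (2 / ((n : ℝ) * (1 / n))) * ∑ k, Real.exp (-2 * ∑ l, θ l * z k l) *
    (x k.succ - x k.castSucc) ^ 2 * z k i * z k j

/-- `J = (2/n) Σ_k z_k z_kᵀ`. -/
noncomputable def JD {n p : ℕ} (z : Fin n → Fin p → ℝ) : Matrix (Fin p) (Fin p) ℝ :=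
  fun i j => (2 / (n : ℝ)) * ∑ k, z k i * z k j

/-- `ε = max_{i,j} |(V(θ) - J)_{ij}|`. -/
noncomputable def epsD {n p : ℕ} (x : Fin (n + 1) → ℝ) (z : Fin n → Fin p → ℝ)
    (θ : Fin p → ℝ) : ℝ :=
  ⨆ i, ⨆ j, |VD x z θ i j - JD z i j|


section Helpers

variable {n p : ℕ}

lemma l1_nonneg (v : Fin p → ℝ) : 0 ≤ l1 v :=
  Finset.sum_nonneg fun _ _ => abs_nonneg _

lemma l1on_nonneg (T : Finset (Fin p)) (v : Fin p → ℝ) : 0 ≤ l1on T v :=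
  Finset.sum_nonneg fun _ _ => abs_nonneg _

lemma abs_le_linf (v : Fin p → ℝ) (i : Fin p) : |v i| ≤ linf v :=
  le_ciSup (f := fun i => |v i|) (Set.Finite.bddAbove (Set.finite_range _)) i

lemma abs_inner_le (h v : Fin p → ℝ) : |∑ i, h i * v i| ≤ l1 h * linf v := by
  calc |∑ i, h i * v i| ≤ ∑ i, |h i * v i| := Finset.abs_sum_le_sum_abs _ _
    _ ≤ ∑ i, |h i| * linf v := by
        refine Finset.sum_le_sum fun i _ => ?_
        rw [abs_mul]
        exact mul_le_mul_of_nonneg_left (abs_le_linf v i) (abs_nonneg _)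
    _ = l1 h * linf v := by rw [l1, Finset.sum_mul]

lemma g_pos (x : ℝ) : 0 < g x := by
  unfold g
  split_ifs with hx
  · norm_num
  rcases lt_or_gt_of_ne hx with hneg | hpos
  · apply div_pos_of_neg_of_neg _ hneg
    rw [sub_neg]
    exact Real.exp_lt_one_iff.mpr (by linarith)
  · apply div_pos _ hpos
    rw [sub_pos]
    exact Real.one_lt_exp_iff.mpr (by linarith)

lemma mem_cone_of_l1_le (θ₀ θhat : Fin p → ℝ) (hmin : l1 θhat ≤ l1 θ₀) :
    (θ₀ - θhat) ∈ cone (Finset.univ.filter fun j => θ₀ j ≠ 0) := by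
  set T := Finset.univ.filter fun j => θ₀ j ≠ 0 with hT
  have hzero : ∀ i ∈ Tᶜ, θ₀ i = 0 := by
    intro i hi
    simpa [hT] using (Finset.mem_compl.mp hi)
  have h1 : l1on Tᶜ (θ₀ - θhat) = ∑ i ∈ Tᶜ, |θhat i| := by
    refine Finset.sum_congr rfl fun i hi => ?_
    simp [hzero i hi]
  have h2 : l1 θ₀ = ∑ i ∈ T, |θ₀ i| := by
    rw [l1, ← Finset.sum_add_sum_compl T]
    have : ∑ i ∈ Tᶜ, |θ₀ i| = 0 :=
      Finset.sum_eq_zero fun i hi => by simp [hzero i hi]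
    rw [this, add_zero]
  have h3 : l1 θhat = ∑ i ∈ T, |θhat i| + ∑ i ∈ Tᶜ, |θhat i| :=
    (Finset.sum_add_sum_compl T _).symm
  have h4 : ∑ i ∈ T, (|θ₀ i| - |θhat i|) ≤ l1on T (θ₀ - θhat) := by
    refine Finset.sum_le_sum fun i _ => ?_
    simpa using abs_sub_abs_le_abs_sub (θ₀ i) (θhat i)
  rw [Finset.sum_sub_distrib] at h4
  show l1on Tᶜ (θ₀ - θhat) ≤ l1on T (θ₀ - θhat)
  rw [h1]
  linarith [hmin, h2 ▸ hmin]

lemma l1on_pos_of_cone {T : Finset (Fin p)} {h : Fin p → ℝ}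
    (hh : h ≠ 0) (hc : h ∈ cone T) : 0 < l1on T h := by
  rcases (l1on_nonneg T h).lt_or_eq with hlt | heq
  · exact hlt
  exfalso
  have hTc : l1on Tᶜ h = 0 :=
    le_antisymm (le_of_le_of_eq hc heq.symm) (l1on_nonneg _ _)
  apply hh
  funext i
  have e1 : ∀ i ∈ T, |h i| = 0 := by
    intro i hi
    exact (Finset.sum_eq_zero_iff_of_nonneg fun _ _ => abs_nonneg _).mp heq.symm i hi
  have e2 : ∀ i ∈ Tᶜ, |h i| = 0 := by
    intro i hi
    exact (Finset.sum_eq_zero_iff_of_nonneg fun _ _ => abs_nonneg _).mp hTc i hi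
  by_cases hi : i ∈ T
  · simpa using e1 i hi
  · simpa using e2 i (Finset.mem_compl.mpr hi)

lemma kappa_sq_le {T : Finset (Fin p)} {J : Matrix (Fin p) (Fin p) ℝ} {h : Fin p → ℝ}
    (hh : h ≠ 0) (hc : h ∈ cone T) (hQ : 0 ≤ quadForm J h) :
    kappa T J ^ 2 * l1on T h ^ 2 ≤ (T.card : ℝ) * quadForm J h := by
  set L := l1on T h with hLdef
  have hL : 0 < L := l1on_pos_of_cone hh hc
  have hbdd : BddBelow {r | ∃ h : Fin p → ℝ, h ≠ 0 ∧ h ∈ cone T ∧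
      r = Real.sqrt T.card * Real.sqrt (quadForm J h) / l1on T h} := by
    refine ⟨0, fun r hr => ?_⟩
    obtain ⟨h', _, hc', rfl⟩ := hr
    exact div_nonneg (mul_nonneg (Real.sqrt_nonneg _) (Real.sqrt_nonneg _)) (l1on_nonneg _ _)
  have hκle : kappa T J ≤ Real.sqrt T.card * Real.sqrt (quadForm J h) / L :=
    csInf_le hbdd ⟨h, hh, hc, rfl⟩
  have hκ0 : 0 ≤ kappa T J := by
    refine le_csInf ⟨_, ⟨h, hh, hc, rfl⟩⟩ fun r hr => ?_
    obtain ⟨h', _, _, rfl⟩ := hr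
    exact div_nonneg (mul_nonneg (Real.sqrt_nonneg _) (Real.sqrt_nonneg _)) (l1on_nonneg _ _)
  have hsq : kappa T J ^ 2 ≤ (Real.sqrt T.card * Real.sqrt (quadForm J h) / L) ^ 2 :=
    pow_le_pow_left₀ hκ0 hκle 2
  have heq : (Real.sqrt T.card * Real.sqrt (quadForm J h) / L) ^ 2 * L ^ 2
      = (T.card : ℝ) * quadForm J h := by
    rw [div_pow, div_mul_cancel₀ _ (pow_ne_zero 2 hL.ne'), mul_pow,
      Real.sq_sqrt (Nat.cast_nonneg _), Real.sq_sqrt hQ]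
  calc kappa T J ^ 2 * L ^ 2
      ≤ (Real.sqrt T.card * Real.sqrt (quadForm J h) / L) ^ 2 * L ^ 2 :=
        mul_le_mul_of_nonneg_right hsq (by positivity)
    _ = (T.card : ℝ) * quadForm J h := heq

end Helpers


section Comp

variable {n p : ℕ}

lemma triple_swap {α β γ : Type*} [Fintype α] [Fintype β] [Fintype γ] (f : α → β → γ → ℝ) :
    ∑ i, ∑ j, ∑ k, f i j k = ∑ k, ∑ i, ∑ j, f i j k := by
  rw [show (∑ i, ∑ j, ∑ k, f i j k) = ∑ i, ∑ k, ∑ j, f i j k from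
    Finset.sum_congr rfl fun i _ => Finset.sum_comm, Finset.sum_comm]

lemma quad_weight (z : Fin n → Fin p → ℝ) (w : Fin n → ℝ) (c : ℝ) (h : Fin p → ℝ) :
    ∑ i, ∑ j, h i * (c * ∑ k, w k * z k i * z k j) * h j
      = c * ∑ k, w k * (∑ j, h j * z k j) ^ 2 := by
  have key : ∀ i j : Fin p, h i * (c * ∑ k, w k * z k i * z k j) * h j
      = ∑ k, c * (w k * ((h i * z k i) * (h j * z k j))) := by
    intro i j
    rw [Finset.mul_sum, Finset.mul_sum, Finset.sum_mul]
    exact Finset.sum_congr rfl fun k _ => by ring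
  simp only [key]
  rw [triple_swap, Finset.mul_sum]
  refine Finset.sum_congr rfl fun k _ => ?_
  rw [sq, Finset.sum_mul_sum]
  simp only [Finset.mul_sum]

lemma quadJ_eq (z : Fin n → Fin p → ℝ) (h : Fin p → ℝ) :
    quadForm (JD z) h = (2 / (n : ℝ)) * ∑ k, (∑ j, h j * z k j) ^ 2 := by
  have := quad_weight z (fun _ => 1) (2 / (n : ℝ)) h
  simp only [one_mul] at this
  simpa [quadForm, JD] using this

lemma quadV_eq (x : Fin (n + 1) → ℝ) (z : Fin n → Fin p → ℝ) (θ h : Fin p → ℝ) :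
    quadForm (VD x z θ) h = (2 / ((n : ℝ) * (1 / n))) *
      ∑ k, Real.exp (-2 * ∑ l, θ l * z k l) * (x k.succ - x k.castSucc) ^ 2 *
        (∑ j, h j * z k j) ^ 2 := by
  have := quad_weight z
    (fun k => Real.exp (-2 * ∑ l, θ l * z k l) * (x k.succ - x k.castSucc) ^ 2)
    (2 / ((n : ℝ) * (1 / n))) h
  simpa [quadForm, VD] using this

lemma psi_contract (x : Fin (n + 1) → ℝ) (z : Fin n → Fin p → ℝ) (θ h : Fin p → ℝ) :
    ∑ i, h i * psiD x z θ i
      = (1 / ((n : ℝ) * (1 / n))) * ∑ k, (Real.exp (-2 * ∑ l, θ l * z k l) *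
          (x k.succ - x k.castSucc) ^ 2 - 1 / n) * (∑ j, h j * z k j) := by
  simp only [psiD]
  have key : ∀ i : Fin p, h i * ((1 / ((n : ℝ) * (1 / n))) * ∑ k, z k i *
      (Real.exp (-2 * ∑ j, θ j * z k j) * (x k.succ - x k.castSucc) ^ 2 - 1 / n))
      = ∑ k, (1 / ((n : ℝ) * (1 / n))) * ((Real.exp (-2 * ∑ l, θ l * z k l) *
          (x k.succ - x k.castSucc) ^ 2 - 1 / n) * (h i * z k i)) := by
    intro i
    rw [Finset.mul_sum, Finset.mul_sum]
    exact Finset.sum_congr rfl fun k _ => by ring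
  simp only [key]
  rw [Finset.sum_comm, Finset.mul_sum]
  refine Finset.sum_congr rfl fun k _ => ?_
  simp only [Finset.mul_sum]

end Comp

/-- Intermediate bound in the proof of Theorem 3.2(i): with `h := θ₀ - θ̂`, `S := |T₀|`,
`K₄ := 4/ν` and `ε := max_{i,j} |(V(θ₀) - J)_{ij}|`, one has
`κ(T₀;J)² ‖h_{T₀}‖₁² ≤ S ε ‖h‖₁² + K₄ S γ ‖h‖₁`. -/
theorem theorem_3_2_i_intermediate
    (n p : ℕ) (hn : 0 < n) (hp : 0 < p)
    (C : ℝ) (hC : 0 < C)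
    (x : Fin (n + 1) → ℝ) (z : Fin n → Fin p → ℝ)
    (hz : ∀ k i, |z k i| ≤ C)
    (θ₀ θhat : Fin p → ℝ)
    (ν : ℝ) (hν : IsLeast (g '' Set.Icc (-(2 * C * l1 θ₀)) (2 * C * l1 θ₀)) ν)
    (γ : ℝ) (hγ : 0 < γ)
    (hfeas : linf (psiD x z θhat) ≤ γ)
    (hmin : l1 θhat ≤ l1 θ₀)
    (htrue : linf (psiD x z θ₀) ≤ γ)
    (hθ₀ : θ₀ ≠ 0) :
    kappa (Finset.univ.filter fun j => θ₀ j ≠ 0) (JD z) ^ 2 *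
        l1on (Finset.univ.filter fun j => θ₀ j ≠ 0) (θ₀ - θhat) ^ 2 ≤
      ((Finset.univ.filter fun j => θ₀ j ≠ 0).card : ℝ) * epsD x z θ₀ * l1 (θ₀ - θhat) ^ 2 +
        4 / ν * ((Finset.univ.filter fun j => θ₀ j ≠ 0).card : ℝ) * γ * l1 (θ₀ - θhat) := by
  classical
  by_cases hh0 : θ₀ - θhat = 0
  · have hz0 : ∀ i, θ₀ i - θhat i = 0 := fun i => by simpa using congrFun hh0 i
    simp [l1on, l1, hz0]
  have hν0 : 0 < ν := by
    obtain ⟨x₀, _, rfl⟩ := hν.1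
    exact g_pos x₀
  have hn0 : ((n : ℝ)) ≠ 0 := Nat.cast_ne_zero.mpr hn.ne'
  have hc1 : ((n : ℝ) * (1 / (n : ℝ))) = 1 := by field_simp
  have hcone : (θ₀ - θhat) ∈ cone (Finset.univ.filter fun j => θ₀ j ≠ 0) :=
    mem_cone_of_l1_le θ₀ θhat hmin
  -- ℓ¹ bound on h
  have hl1h : l1 (θ₀ - θhat) ≤ 2 * l1 θ₀ := by
    have htri : l1 (θ₀ - θhat) ≤ l1 θ₀ + l1 θhat := by
      rw [l1, l1, l1, ← Finset.sum_add_distrib]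
      refine Finset.sum_le_sum fun i _ => ?_
      simpa [Pi.sub_apply] using abs_sub (θ₀ i) (θhat i)
    linarith
  -- |⟨h, z_k⟩| is in the interval
  have hmem : ∀ k : Fin n, (∑ j, (θ₀ - θhat) j * z k j) ∈
      Set.Icc (-(2 * C * l1 θ₀)) (2 * C * l1 θ₀) := by
    intro k
    have habs : |∑ j, (θ₀ - θhat) j * z k j| ≤ 2 * C * l1 θ₀ := by
      calc |∑ j, (θ₀ - θhat) j * z k j| ≤ ∑ j, |(θ₀ - θhat) j * z k j| :=
            Finset.abs_sum_le_sum_abs _ _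
        _ ≤ ∑ j, |(θ₀ - θhat) j| * C := by
            refine Finset.sum_le_sum fun j _ => ?_
            rw [abs_mul]
            exact mul_le_mul_of_nonneg_left (hz k j) (abs_nonneg _)
        _ = l1 (θ₀ - θhat) * C := by rw [l1, Finset.sum_mul]
        _ ≤ 2 * l1 θ₀ * C := mul_le_mul_of_nonneg_right hl1h hC.le
        _ = 2 * C * l1 θ₀ := by ring
    exact Set.mem_Icc.mpr (abs_le.mp habs)
  have hgk : ∀ k : Fin n, ν ≤ g (∑ j, (θ₀ - θhat) j * z k j) := fun k =>
    hν.2 ⟨_, hmem k, rfl⟩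
  -- pointwise lower bound
  have hpt : ∀ k : Fin n,
      ν * (Real.exp (-2 * ∑ l, θ₀ l * z k l) * (x k.succ - x k.castSucc) ^ 2 *
        (∑ j, (θ₀ - θhat) j * z k j) ^ 2)
      ≤ (Real.exp (-2 * ∑ l, θhat l * z k l) - Real.exp (-2 * ∑ l, θ₀ l * z k l)) *
        (x k.succ - x k.castSucc) ^ 2 * (∑ j, (θ₀ - θhat) j * z k j) := by
    intro k
    set u : ℝ := ∑ j, (θ₀ - θhat) j * z k j with hu
    have hsub : ∑ l, θhat l * z k l = (∑ l, θ₀ l * z k l) - u := by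
      rw [hu, ← Finset.sum_sub_distrib]
      exact Finset.sum_congr rfl fun l _ => by simp [Pi.sub_apply]; ring
    rw [hsub]
    have hexp : Real.exp (-2 * ((∑ l, θ₀ l * z k l) - u))
        = Real.exp (-2 * ∑ l, θ₀ l * z k l) * Real.exp (2 * u) := by
      rw [← Real.exp_add]; ring_nf
    rw [hexp]
    have hgu : (Real.exp (2 * u) - 1) * u = g u * u ^ 2 := by
      unfold g
      split_ifs with h0
      · simp [h0]
      · field_simp
    have key : ν * (Real.exp (-2 * ∑ l, θ₀ l * z k l) * (x k.succ - x k.castSucc) ^ 2 * u ^ 2)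
        ≤ g u * (Real.exp (-2 * ∑ l, θ₀ l * z k l) * (x k.succ - x k.castSucc) ^ 2 * u ^ 2) :=
      mul_le_mul_of_nonneg_right (hgk k) (by positivity)
    have e2 : (Real.exp (-2 * ∑ l, θ₀ l * z k l) * Real.exp (2 * u)
          - Real.exp (-2 * ∑ l, θ₀ l * z k l)) * (x k.succ - x k.castSucc) ^ 2 * u
        = g u * (Real.exp (-2 * ∑ l, θ₀ l * z k l) * (x k.succ - x k.castSucc) ^ 2 * u ^ 2) := by
      rw [show g u * (Real.exp (-2 * ∑ l, θ₀ l * z k l) * (x k.succ - x k.castSucc) ^ 2 * u ^ 2)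
        = (g u * u ^ 2) * (Real.exp (-2 * ∑ l, θ₀ l * z k l) * (x k.succ - x k.castSucc) ^ 2)
        by ring, ← hgu]
      ring
    rw [e2]
    exact key
  -- sum up
  have hsumlow : ν * ∑ k, Real.exp (-2 * ∑ l, θ₀ l * z k l) * (x k.succ - x k.castSucc) ^ 2 *
      (∑ j, (θ₀ - θhat) j * z k j) ^ 2
      ≤ ∑ k, (Real.exp (-2 * ∑ l, θhat l * z k l) - Real.exp (-2 * ∑ l, θ₀ l * z k l)) *
        (x k.succ - x k.castSucc) ^ 2 * (∑ j, (θ₀ - θhat) j * z k j) := by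
    rw [Finset.mul_sum]
    exact Finset.sum_le_sum fun k _ => hpt k
  -- ψ contraction
  have hψa := psi_contract x z θhat (θ₀ - θhat)
  have hψb := psi_contract x z θ₀ (θ₀ - θhat)
  rw [hc1, one_div_one, one_mul] at hψa hψb
  have hdiff : (∑ i, (θ₀ - θhat) i * psiD x z θhat i) - ∑ i, (θ₀ - θhat) i * psiD x z θ₀ i
      = ∑ k, (Real.exp (-2 * ∑ l, θhat l * z k l) - Real.exp (-2 * ∑ l, θ₀ l * z k l)) *
        (x k.succ - x k.castSucc) ^ 2 * (∑ j, (θ₀ - θhat) j * z k j) := by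
    rw [hψa, hψb, ← Finset.sum_sub_distrib]
    exact Finset.sum_congr rfl fun k _ => by ring
  -- upper bound on the difference
  have hup : (∑ i, (θ₀ - θhat) i * psiD x z θhat i)
      - ∑ i, (θ₀ - θhat) i * psiD x z θ₀ i ≤ 2 * γ * l1 (θ₀ - θhat) := by
    have ha := abs_inner_le (θ₀ - θhat) (psiD x z θhat)
    have hb := abs_inner_le (θ₀ - θhat) (psiD x z θ₀)
    have hl1 := l1_nonneg (θ₀ - θhat)
    have h1 := mul_le_mul_of_nonneg_left hfeas hl1
    have h2 := mul_le_mul_of_nonneg_left htrue hl1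
    have h3 := le_abs_self (∑ i, (θ₀ - θhat) i * psiD x z θhat i)
    have h4 := neg_abs_le (∑ i, (θ₀ - θhat) i * psiD x z θ₀ i)
    linarith
  rw [← hdiff] at hsumlow
  have hS : ν * ∑ k, Real.exp (-2 * ∑ l, θ₀ l * z k l) * (x k.succ - x k.castSucc) ^ 2 *
      (∑ j, (θ₀ - θhat) j * z k j) ^ 2 ≤ 2 * γ * l1 (θ₀ - θhat) := hsumlow.trans hup
  -- quadratic form of V
  have hQV : quadForm (VD x z θ₀) (θ₀ - θhat) = 2 *
      ∑ k, Real.exp (-2 * ∑ l, θ₀ l * z k l) * (x k.succ - x k.castSucc) ^ 2 *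
        (∑ j, (θ₀ - θhat) j * z k j) ^ 2 := by
    rw [quadV_eq, hc1, div_one]
  have hQVle : quadForm (VD x z θ₀) (θ₀ - θhat) ≤ 4 / ν * γ * l1 (θ₀ - θhat) := by
    rw [hQV, show (4 : ℝ) / ν * γ * l1 (θ₀ - θhat) = 4 * γ * l1 (θ₀ - θhat) / ν by ring,
      le_div_iff₀ hν0]
    nlinarith [hS]
  -- ε bound
  have heps : ∀ i j, |VD x z θ₀ i j - JD z i j| ≤ epsD x z θ₀ := by
    intro i j
    have h1 : |VD x z θ₀ i j - JD z i j| ≤ ⨆ j', |VD x z θ₀ i j' - JD z i j'| :=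
      le_ciSup (f := fun j' => |VD x z θ₀ i j' - JD z i j'|)
        (Set.Finite.bddAbove (Set.finite_range _)) j
    exact h1.trans (le_ciSup (f := fun i' => ⨆ j', |VD x z θ₀ i' j' - JD z i' j'|)
      (Set.Finite.bddAbove (Set.finite_range _)) i)
  have hQJle : quadForm (JD z) (θ₀ - θhat) ≤ quadForm (VD x z θ₀) (θ₀ - θhat)
      + epsD x z θ₀ * l1 (θ₀ - θhat) ^ 2 := by
    have hsplit : quadForm (JD z) (θ₀ - θhat) = quadForm (VD x z θ₀) (θ₀ - θhat)
        + ∑ i, ∑ j, (θ₀ - θhat) i * (JD z i j - VD x z θ₀ i j) * (θ₀ - θhat) j := by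
      simp only [quadForm]
      rw [← Finset.sum_add_distrib]
      refine Finset.sum_congr rfl fun i _ => ?_
      rw [← Finset.sum_add_distrib]
      exact Finset.sum_congr rfl fun j _ => by ring
    rw [hsplit]
    have hbound : ∑ i, ∑ j, (θ₀ - θhat) i * (JD z i j - VD x z θ₀ i j) * (θ₀ - θhat) j
        ≤ epsD x z θ₀ * l1 (θ₀ - θhat) ^ 2 := by
      have e : epsD x z θ₀ * l1 (θ₀ - θhat) ^ 2
          = ∑ i, ∑ j, |(θ₀ - θhat) i| * epsD x z θ₀ * |(θ₀ - θhat) j| := by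
        rw [l1, sq, Finset.sum_mul_sum, Finset.mul_sum]
        refine Finset.sum_congr rfl fun i _ => ?_
        rw [Finset.mul_sum]
        exact Finset.sum_congr rfl fun j _ => by ring
      rw [e]
      refine Finset.sum_le_sum fun i _ => Finset.sum_le_sum fun j _ => ?_
      calc (θ₀ - θhat) i * (JD z i j - VD x z θ₀ i j) * (θ₀ - θhat) j
          ≤ |(θ₀ - θhat) i * (JD z i j - VD x z θ₀ i j) * (θ₀ - θhat) j| := le_abs_self _
        _ = |(θ₀ - θhat) i| * |JD z i j - VD x z θ₀ i j| * |(θ₀ - θhat) j| := by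
            rw [abs_mul, abs_mul]
        _ ≤ |(θ₀ - θhat) i| * epsD x z θ₀ * |(θ₀ - θhat) j| := by
            refine mul_le_mul_of_nonneg_right (mul_le_mul_of_nonneg_left ?_ (abs_nonneg _))
              (abs_nonneg _)
            rw [abs_sub_comm]
            exact heps i j
    linarith
  have hQJ0 : 0 ≤ quadForm (JD z) (θ₀ - θhat) := by
    rw [quadJ_eq]
    have : 0 ≤ ∑ k : Fin n, (∑ j, (θ₀ - θhat) j * z k j) ^ 2 :=
      Finset.sum_nonneg fun k _ => sq_nonneg _
    positivity
  have hker := kappa_sq_le (T := Finset.univ.filter fun j => θ₀ j ≠ 0) (J := JD z)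
    hh0 hcone hQJ0
  have hcard : (0 : ℝ) ≤ ((Finset.univ.filter fun j => θ₀ j ≠ 0).card : ℝ) :=
    Nat.cast_nonneg _
  calc kappa (Finset.univ.filter fun j => θ₀ j ≠ 0) (JD z) ^ 2 *
        l1on (Finset.univ.filter fun j => θ₀ j ≠ 0) (θ₀ - θhat) ^ 2
      ≤ ((Finset.univ.filter fun j => θ₀ j ≠ 0).card : ℝ) * quadForm (JD z) (θ₀ - θhat) :=
        hker
    _ ≤ ((Finset.univ.filter fun j => θ₀ j ≠ 0).card : ℝ) *
        (4 / ν * γ * l1 (θ₀ - θhat) + epsD x z θ₀ * l1 (θ₀ - θhat) ^ 2) :=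
        mul_le_mul_of_nonneg_left (by linarith) hcard
    _ = ((Finset.univ.filter fun j => θ₀ j ≠ 0).card : ℝ) * epsD x z θ₀ * l1 (θ₀ - θhat) ^ 2 +
        4 / ν * ((Finset.univ.filter fun j => θ₀ j ≠ 0).card : ℝ) * γ * l1 (θ₀ - θhat) := by
        ring
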